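/- Let V be symmetric positive definite and S skew-symmetric, B = −(I+S)V^{−1}. Then for all x ∈ ℝⁿ, ⟨x, Bx⟩_V ≤ −‖x‖_V² / ‖V‖, where ⟨x,y⟩_V = ⟨x, V^{−1}y⟩ and ‖·‖_V the induced norm, and ‖V‖ the Euclidean operator norm of V. -/

import Mathlib

open Matrix
open scoped Matrix.Norms.L2Operator

lemma key_ineq (n : ℕ) (V : Matrix (Fin n) (Fin n) ℝ) (y : Fin n → ℝ) :
    y ⬝ᵥ (V *ᵥ y) ≤ ‖V‖ * (y ⬝ᵥ y) := by
  let y' : EuclideanSpace ℝ (Fin n) := (WithLp.equiv 2 _).symm y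
  let z' : EuclideanSpace ℝ (Fin n) := (WithLp.equiv 2 _).symm (V *ᵥ y)
  have h1 : y ⬝ᵥ (V *ᵥ y) = inner ℝ y' z' := by
    rw [show inner ℝ y' z' = (V *ᵥ y) ⬝ᵥ star y from EuclideanSpace.inner_toLp_toLp _ _]
    simp [dotProduct_comm]
  have h2 : y ⬝ᵥ y = ‖y'‖ ^ 2 := by
    rw [← real_inner_self_eq_norm_sq, show inner ℝ y' y' = y ⬝ᵥ star y from EuclideanSpace.inner_toLp_toLp _ _]
    simp
  rw [h1, h2]
  calc inner ℝ y' z'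
      ≤ ‖y'‖ * ‖z'‖ := real_inner_le_norm _ _
    _ ≤ ‖y'‖ * (‖V‖ * ‖y'‖) := by
        apply mul_le_mul_of_nonneg_left _ (norm_nonneg _)
        exact V.l2_opNorm_mulVec y'
    _ = ‖V‖ * ‖y'‖ ^ 2 := by ring

/-- for V symmetric positive definite, S skew-symmetric and
B = −(I+S)V⁻¹, one has ⟨x, Bx⟩_V ≤ −‖x‖_V²/‖V‖ for all x, where
⟨x,y⟩_V = ⟨x, V⁻¹y⟩ and ‖V‖ is the Euclidean operator norm. -/
theorem dissipativity_estimate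
    (n : ℕ) (V S B : Matrix (Fin n) (Fin n) ℝ)
    (hV : V.PosDef) (hVsym : Vᵀ = V) (hSskew : Sᵀ = -S)
    (hB : B = -((1 + S) * V⁻¹)) :
    ∀ x : Fin n → ℝ,
      x ⬝ᵥ (V⁻¹ *ᵥ (B *ᵥ x)) ≤ - (x ⬝ᵥ (V⁻¹ *ᵥ x)) / ‖V‖ := by
  intro x
  have hdet : IsUnit V.det := isUnit_iff_ne_zero.mpr (ne_of_gt hV.det_pos)
  have hVinv : V * V⁻¹ = 1 := mul_nonsing_inv V hdet
  have hVsym' : V⁻¹ᵀ = V⁻¹ := by rw [transpose_nonsing_inv, hVsym]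
  set y := V⁻¹ *ᵥ x with hy
  have hx : V *ᵥ y = x := by
    rw [hy, mulVec_mulVec, hVinv, one_mulVec]
  -- x ⬝ᵥ (V⁻¹ *ᵥ z) = y ⬝ᵥ z
  have hkey : ∀ z : Fin n → ℝ, x ⬝ᵥ (V⁻¹ *ᵥ z) = y ⬝ᵥ z := by
    intro z
    rw [dotProduct_mulVec, ← mulVec_transpose, hVsym']
  have hySy : y ⬝ᵥ (S *ᵥ y) = 0 := by
    have h1 : y ⬝ᵥ (S *ᵥ y) = (Sᵀ *ᵥ y) ⬝ᵥ y := by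
      rw [dotProduct_mulVec, ← mulVec_transpose]
    have h2 : (Sᵀ *ᵥ y) ⬝ᵥ y = -(y ⬝ᵥ (S *ᵥ y)) := by
      rw [hSskew, neg_mulVec, neg_dotProduct, dotProduct_comm]
    linarith [h1, h2]
  have hLHS : x ⬝ᵥ (V⁻¹ *ᵥ (B *ᵥ x)) = -(y ⬝ᵥ y) := by
    rw [hkey, hB]
    have : (-((1 + S) * V⁻¹)) *ᵥ x = -(y + S *ᵥ y) := by
      rw [neg_mulVec, ← mulVec_mulVec, add_mulVec, one_mulVec, ← hy]
    rw [this, dotProduct_neg, dotProduct_add, hySy, add_zero]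
  have hRHS : x ⬝ᵥ (V⁻¹ *ᵥ x) = y ⬝ᵥ (V *ᵥ y) := by
    rw [hkey, hx]
  rw [hLHS, hRHS]
  rcases eq_or_lt_of_le (norm_nonneg V) with h0 | hpos
  · rw [← h0, div_zero]
    have : (0:ℝ) ≤ y ⬝ᵥ y := Finset.sum_nonneg fun i _ => mul_self_nonneg (y i)
    linarith
  · rw [neg_div, neg_le_neg_iff, div_le_iff₀ hpos]
    have := key_ineq n V y
    nlinarith
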